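/- arXiv:2507.14620 — 2 statements merged into one kernel-verified Lean document; each statement's English description precedes it below -/
import Mathlib

section
/- Let G be a finite simple graph, S ⊆ V(G) with |S| = s, and let 1 ≤ ℓ ≤ s. Define α_{s,ℓ}(k,i) for 1 ≤ k ≤ s, 1 ≤ i ≤ ℓ by α_{s,ℓ}(k,i) := C(s−i, k−i) − Σ_{j=i+1}^{ℓ} α_{s,ℓ}(k,j) · C(s−i, j−i). If for all k with 1 ≤ k ≤ s, Σ_{W ⊆ S, |W| = k} |Obs(G;W)| = Σ_{i=1}^{ℓ} α_{s,ℓ}(k,i) · Σ_{W ⊆ S, |W| = i} |Obs(G;W)|, then the polynomial E(G;S,q) has degree at most ℓ. -/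
open Polynomial

/-- The closed neighborhood `N[S]` of a set of vertices. -/
def closedNbhd {V : Type*} (G : SimpleGraph V) (S : Set V) : Set V :=
  ⋃ v ∈ S, insert v (G.neighborSet v)

/-- A set `B` is closed under the zero forcing step: whenever `x ∈ B` has exactly one
neighbor `y` outside `B`, then `y` is already in `B`. -/
def PDClosed {V : Type*} (G : SimpleGraph V) (B : Set V) : Prop :=
  ∀ x ∈ B, ∀ y : V, G.neighborSet x \ B = {y} → y ∈ B

/-- `Obs G S` is the set of observed vertices of the power domination process started with
PMU placement `S`: the least superset of `N[S]` closed under the zero forcing step. -/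
def Obs {V : Type*} (G : SimpleGraph V) (S : Set V) : Set V :=
  ⋂₀ {B : Set V | closedNbhd G S ⊆ B ∧ PDClosed G B}

/-- The expected value polynomial
`E(G;S,q) = Σ_{W ⊆ S} |Obs(G;W)| q^{|S∖W|} (1−q)^{|W|}`. -/
noncomputable def expol {V : Type*} (G : SimpleGraph V) (S : Finset V) : Polynomial ℝ :=
  ∑ W ∈ S.powerset,
    ((Obs G ↑W).ncard : Polynomial ℝ) * X ^ (S.card - W.card) * (1 - X) ^ W.card

/-- The binomial coefficient `C(s−i, k−i)`, interpreted as `0` when `k < i`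
(i.e. when the lower index `k − i` would be negative). -/
def binShift (s k i : ℕ) : ℤ :=
  if i ≤ k then ((s - i).choose (k - i) : ℤ) else 0

/-- `alphaCoef s ℓ k i = α_{s,ℓ}(k,i)`, defined by downward recursion on `i`:
`α_{s,ℓ}(k,i) = C(s−i, k−i) − Σ_{j=i+1}^{ℓ} α_{s,ℓ}(k,j) · C(s−i, j−i)`. -/
def alphaCoef (s ℓ k i : ℕ) : ℤ :=
  binShift s k i -
    ∑ j ∈ (Finset.Ioc i ℓ).attach,
      alphaCoef s ℓ k j.1 * (((s - i).choose (j.1 - i) : ℕ) : ℤ)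
termination_by ℓ - i
decreasing_by
  have h := Finset.mem_Ioc.mp j.2
  omega

lemma alpha_zero (s ℓ i : ℕ) (hi : 1 ≤ i) : alphaCoef s ℓ 0 i = 0 := by
  rw [alphaCoef]
  have h1 : binShift s 0 i = 0 := by
    simp only [binShift]
    rw [if_neg]
    omega
  rw [h1, zero_sub, neg_eq_zero]
  refine Finset.sum_eq_zero ?_
  rintro ⟨j, hj⟩ -
  have hj' := Finset.mem_Ioc.mp hj
  rw [alpha_zero s ℓ j (by omega)]
  ring
termination_by ℓ - i
decreasing_by
  have := Finset.mem_Ioc.mp hj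
  omega

lemma binsum (s i : ℕ) (hi : i ≤ s) :
    ∑ k ∈ Finset.range (s+1), ((binShift s k i : ℤ) : Polynomial ℝ) * (X ^ (s-k) * (1-X) ^ k)
      = (1 - X) ^ i := by
  rw [← Finset.sum_range_add_sum_Ico _ (show i ≤ s+1 by omega)]
  have h0 : ∑ k ∈ Finset.range i, ((binShift s k i : ℤ) : Polynomial ℝ) * (X ^ (s-k) * (1-X)^k) = 0 := by
    refine Finset.sum_eq_zero fun k hk => ?_
    have hb : binShift s k i = 0 := by
      simp only [binShift]
      rw [if_neg]
      simp only [Finset.mem_range] at hk; omega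
    rw [hb]; push_cast; ring
  rw [h0, zero_add, Finset.sum_Ico_eq_sum_range]
  have hsi : s + 1 - i = s - i + 1 := by omega
  rw [hsi]
  have key2 : (∑ m ∈ Finset.range (s-i+1), ((1:Polynomial ℝ)-X)^m * X^(s-i-m) * ((s-i).choose m : Polynomial ℝ)) = 1 := by
    rw [← add_pow]
    simp
  calc ∑ m ∈ Finset.range (s-i+1), ((binShift s (i+m) i : ℤ) : Polynomial ℝ) * (X^(s-(i+m)) * (1-X)^(i+m))
      = (1-X)^i * ∑ m ∈ Finset.range (s-i+1), (1-X)^m * X^(s-i-m) * ((s-i).choose m : Polynomial ℝ) := by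
        rw [Finset.mul_sum]
        refine Finset.sum_congr rfl fun m hm => ?_
        have h1 : binShift s (i+m) i = ((s-i).choose m : ℤ) := by
          simp only [binShift]
          rw [if_pos (by omega), show i + m - i = m from by omega]
        rw [h1]
        have h2 : s - (i+m) = s - i - m := by omega
        rw [h2, pow_add]
        push_cast
        ring
    _ = (1-X)^i := by rw [key2, mul_one]


noncomputable def Paux (s ℓ i : ℕ) : Polynomial ℝ :=
  ∑ k ∈ Finset.range (s+1), ((alphaCoef s ℓ k i : ℤ) : Polynomial ℝ) * (X ^ (s-k) * (1-X) ^ k)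

lemma Paux_rec (s ℓ i : ℕ) (hi : i ≤ s) :
    Paux s ℓ i = (1-X)^i
      - ∑ j ∈ Finset.Ioc i ℓ, (((s-i).choose (j-i) : ℕ) : Polynomial ℝ) * Paux s ℓ j := by
  have hα : ∀ k, ((alphaCoef s ℓ k i : ℤ) : Polynomial ℝ)
      = ((binShift s k i : ℤ) : Polynomial ℝ)
        - ∑ j ∈ Finset.Ioc i ℓ, ((alphaCoef s ℓ k j : ℤ) : Polynomial ℝ)
            * (((s-i).choose (j-i) : ℕ) : Polynomial ℝ) := by
    intro k
    conv_lhs => rw [alphaCoef]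
    push_cast
    congr 1
    exact Finset.sum_attach (Finset.Ioc i ℓ)
      (fun j => ((alphaCoef s ℓ k j : ℤ) : Polynomial ℝ) * (((s-i).choose (j-i) : ℕ) : Polynomial ℝ))
  unfold Paux
  calc ∑ k ∈ Finset.range (s+1), ((alphaCoef s ℓ k i : ℤ) : Polynomial ℝ) * (X^(s-k)*(1-X)^k)
      = (∑ k ∈ Finset.range (s+1), ((binShift s k i : ℤ) : Polynomial ℝ) * (X^(s-k)*(1-X)^k))
        - ∑ k ∈ Finset.range (s+1), ∑ j ∈ Finset.Ioc i ℓ,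
            ((alphaCoef s ℓ k j : ℤ) : Polynomial ℝ) * (((s-i).choose (j-i) : ℕ) : Polynomial ℝ)
              * (X^(s-k)*(1-X)^k) := by
        rw [← Finset.sum_sub_distrib]
        refine Finset.sum_congr rfl fun k _ => ?_
        rw [hα k, sub_mul, Finset.sum_mul]
    _ = (1-X)^i - ∑ j ∈ Finset.Ioc i ℓ, (((s-i).choose (j-i) : ℕ) : Polynomial ℝ)
          * ∑ k ∈ Finset.range (s+1), ((alphaCoef s ℓ k j : ℤ) : Polynomial ℝ) * (X^(s-k)*(1-X)^k) := by
        rw [binsum s i hi, Finset.sum_comm]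
        congr 1
        refine Finset.sum_congr rfl fun j _ => ?_
        rw [Finset.mul_sum]
        refine Finset.sum_congr rfl fun k _ => ?_
        ring
    _ = _ := rfl

lemma deg_one_sub_X_pow (n : ℕ) : ((1 - X : Polynomial ℝ)^n).degree ≤ (n : WithBot ℕ) := by
  have h1 : ((1:Polynomial ℝ) - X).degree ≤ 1 := by
    refine le_trans (degree_sub_le _ _) ?_
    simp
  simpa using degree_pow_le_of_le n h1

lemma Paux_degree (s ℓ i : ℕ) (hi : i ≤ ℓ) (hls : ℓ ≤ s) :
    (Paux s ℓ i).degree ≤ (ℓ : WithBot ℕ) := by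
  rw [Paux_rec s ℓ i (le_trans hi hls)]
  refine le_trans (degree_sub_le _ _) (max_le ?_ ?_)
  · exact le_trans (deg_one_sub_X_pow i) (by exact_mod_cast hi)
  · refine le_trans (degree_sum_le _ _) (Finset.sup_le ?_)
    intro j hj
    have hj' := Finset.mem_Ioc.mp hj
    refine le_trans (degree_mul_le _ _) ?_
    calc _ ≤ 0 + (ℓ : WithBot ℕ) :=
          add_le_add (degree_natCast_le _) (Paux_degree s ℓ j hj'.2 hls)
      _ = _ := zero_add _
termination_by ℓ - i
decreasing_by
  have := Finset.mem_Ioc.mp hj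
  omega


lemma Obs_empty {V : Type} (G : SimpleGraph V) : Obs G (∅ : Set V) = ∅ := by
  have hmem : (∅ : Set V) ∈ {B : Set V | closedNbhd G ∅ ⊆ B ∧ PDClosed G B} := by
    constructor
    · simp [closedNbhd]
    · intro x hx
      exact absurd hx (Set.notMem_empty x)
  exact Set.eq_empty_of_subset_empty (Set.sInter_subset_of_mem hmem)

lemma range_eq_insert_Icc (n : ℕ) : Finset.range (n+1) = insert 0 (Finset.Icc 1 n) := by
  ext x
  simp only [Finset.mem_range, Finset.mem_insert, Finset.mem_Icc]
  omega

theorem stmt4 {V : Type} [Fintype V] (G : SimpleGraph V) (S : Finset V)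
    (s ℓ : ℕ) (hs : S.card = s) (hℓ : 1 ≤ ℓ) (hℓs : ℓ ≤ s)
    (h : ∀ k, 1 ≤ k → k ≤ s →
      (∑ W ∈ Finset.powersetCard k S, ((Obs G ↑W).ncard : ℤ))
        = ∑ i ∈ Finset.Icc 1 ℓ,
            alphaCoef s ℓ k i * ∑ W ∈ Finset.powersetCard i S, ((Obs G ↑W).ncard : ℤ)) :
    (expol G S).degree ≤ (ℓ : WithBot ℕ) := by
  subst hs
  set s := S.card with hs
  set T : ℕ → ℤ := fun i => ∑ W ∈ Finset.powersetCard i S, ((Obs G ↑W).ncard : ℤ) with hT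
  classical
  have e1 : expol G S = ∑ k ∈ Finset.range (s + 1),
      ((T k : ℤ) : Polynomial ℝ) * (X^(s-k)*(1-X)^k) := by
    rw [expol, Finset.powerset_card_disjiUnion]
    erw [Finset.sum_disjiUnion]
    refine Finset.sum_congr rfl fun k hk => ?_
    rw [hT]
    push_cast
    rw [Finset.sum_mul]
    refine Finset.sum_congr rfl fun W hW => ?_
    have hc : W.card = k := (Finset.mem_powersetCard.mp hW).2
    rw [hc]
    ring
  have hT0 : T 0 = 0 := by
    rw [hT]
    simp only [Finset.powersetCard_zero, Finset.sum_singleton, Finset.coe_empty]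
    rw [Obs_empty]
    simp
  have e2 : expol G S = ∑ k ∈ Finset.Icc 1 s,
      ((T k : ℤ) : Polynomial ℝ) * (X^(s-k)*(1-X)^k) := by
    rw [e1, range_eq_insert_Icc, Finset.sum_insert (by simp), hT0]
    simp
  have e3 : expol G S = ∑ i ∈ Finset.Icc 1 ℓ, ((T i : ℤ) : Polynomial ℝ) * Paux s ℓ i := by
    rw [e2]
    have hstep : ∀ k ∈ Finset.Icc 1 s, ((T k : ℤ) : Polynomial ℝ) * (X^(s-k)*(1-X)^k)
        = ∑ i ∈ Finset.Icc 1 ℓ, ((alphaCoef s ℓ k i : ℤ) : Polynomial ℝ)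
            * ((T i : ℤ) : Polynomial ℝ) * (X^(s-k)*(1-X)^k) := by
      intro k hk
      have hk' := Finset.mem_Icc.mp hk
      have hh := h k hk'.1 hk'.2
      have hh2 : ((T k : ℤ) : Polynomial ℝ)
          = ∑ i ∈ Finset.Icc 1 ℓ, ((alphaCoef s ℓ k i : ℤ) : Polynomial ℝ) * ((T i : ℤ) : Polynomial ℝ) := by
        rw [hT]
        exact_mod_cast congrArg (fun z : ℤ => ((z : ℤ) : Polynomial ℝ)) hh
      rw [hh2, Finset.sum_mul]
    rw [Finset.sum_congr rfl hstep, Finset.sum_comm]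
    refine Finset.sum_congr rfl fun i hi => ?_
    have hi' := Finset.mem_Icc.mp hi
    have hP : Paux s ℓ i = ∑ k ∈ Finset.Icc 1 s,
        ((alphaCoef s ℓ k i : ℤ) : Polynomial ℝ) * (X^(s-k)*(1-X)^k) := by
      unfold Paux
      rw [range_eq_insert_Icc, Finset.sum_insert (by simp), alpha_zero s ℓ i hi'.1]
      simp
    rw [hP, Finset.mul_sum]
    refine Finset.sum_congr rfl fun k _ => ?_
    ring
  rw [e3]
  refine le_trans (degree_sum_le _ _) (Finset.sup_le fun i hi => ?_)
  refine le_trans (degree_mul_le _ _) ?_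
  calc _ ≤ 0 + (ℓ : WithBot ℕ) :=
        add_le_add (degree_intCast_le _) (Paux_degree s ℓ i (Finset.mem_Icc.mp hi).2 hℓs)
    _ = _ := zero_add _
end

section
/- Let s ≥ 4 be even and ℓ ∈ ℕ with ℓ > s²·2^{s+1}, and let G := G_s(ℓ) be the graph of the row–column construction built from any 1-factorization M_1,...,M_{s−1} of the complete graph K_s on vertex set {1,...,s}. Let S := { v_{i,2s} : i ∈ {1,...,s} } and K := { v_{i,2} : i ∈ {1,...,s} }. Then for every set A ⊆ V(G) with |A| = s and A ∩ K ≠ ∅, one has E(G;A,q) ≤ E(G;S,q) for all q ∈ [0,1], and E(G;A,q) < E(G;S,q) for all q ∈ (0,1). (Note: vertices of K have degree C(s,2)+2, while all vertices of S have degree 3.) -/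
open Polynomial

/-- The row–column construction `G_s(ℓ)` built from a 1-factorization of `K_s`, encoded by
fixed-point-free involutions `M j : Fin s → Fin s` (the perfect matching `M_j` pairs `i`
with `M j i`).  Vertices are pairs `(i, j)` with `i : Fin s` a row index and `j : Fin (ℓ+2s)`
a 0-based column index (so the paper's 1-based column `c` is the index `c − 1`).  Edges:
`E₁` joins horizontally consecutive vertices; `E₂` makes the (1-based) second column a
clique; `E₃` places the matching `M_j` (1-based `j ∈ {1,…,s−1}`) on the (1-based) column
`2j + 2`, i.e. on the 0-based column `2(j−1) + 3`. -/
def rowColGraph (s ℓ : ℕ) (M : Fin (s - 1) → Fin s → Fin s) :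
    SimpleGraph (Fin s × Fin (ℓ + 2 * s)) :=
  SimpleGraph.fromRel (fun p q =>
    (p.1 = q.1 ∧ (q.2 : ℕ) = (p.2 : ℕ) + 1) ∨
    ((p.2 : ℕ) = 1 ∧ (q.2 : ℕ) = 1) ∨
    (∃ j : Fin (s - 1),
      (p.2 : ℕ) = 2 * (j : ℕ) + 3 ∧ (q.2 : ℕ) = 2 * (j : ℕ) + 3 ∧ M j p.1 = q.1))

/-- The expected number of observed vertices, evaluated at a real failure probability `q`. -/
noncomputable def expolEval {V : Type*} (G : SimpleGraph V) (S : Finset V) (q : ℝ) : ℝ :=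
  ∑ W ∈ S.powerset,
    ((Obs G ↑W).ncard : ℝ) * q ^ (S.card - W.card) * (1 - q) ^ W.card

section basics
variable {V : Type*} (G : SimpleGraph V) (S : Set V)

lemma closedNbhd_subset_obs : closedNbhd G S ⊆ Obs G S :=
  Set.subset_sInter fun _ hB => hB.1

lemma obs_pdclosed : PDClosed G (Obs G S) := by
  intro x hx y hy
  intro B hB
  have hsub : G.neighborSet x \ B ⊆ {y} := by
    intro z hz
    have : z ∈ G.neighborSet x \ Obs G S := ⟨hz.1, fun hz' => hz.2 (hz' B hB)⟩
    rwa [hy] at this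
  by_cases hyB : y ∈ B
  · exact hyB
  · have hyx : y ∈ G.neighborSet x \ Obs G S := by rw [hy]; exact rfl
    have : G.neighborSet x \ B = {y} := by
      apply Set.Subset.antisymm hsub
      intro z hz
      rw [Set.mem_singleton_iff] at hz
      subst hz
      exact ⟨hyx.1, hyB⟩
    exact hB.2 x (hx B hB) y this

lemma obs_subset_closed {B : Set V} (h1 : closedNbhd G S ⊆ B) (h2 : PDClosed G B) :
    Obs G S ⊆ B :=
  Set.sInter_subset_of_mem ⟨h1, h2⟩

lemma mem_obs_of_mem {v : V} (hv : v ∈ S) : v ∈ Obs G S :=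
  closedNbhd_subset_obs G S (Set.mem_biUnion hv (Set.mem_insert _ _))

lemma mem_obs_of_adj {v y : V} (hv : v ∈ S) (h : G.Adj v y) : y ∈ Obs G S :=
  closedNbhd_subset_obs G S (Set.mem_biUnion hv (Set.mem_insert_of_mem _ h))

lemma obs_force {x y : V} (hx : x ∈ Obs G S) (hxy : G.Adj x y)
    (h : ∀ z, G.Adj x z → z ≠ y → z ∈ Obs G S) : y ∈ Obs G S := by
  by_cases hy : y ∈ Obs G S
  · exact hy
  · apply obs_pdclosed G S x hx y
    ext z
    simp only [Set.mem_diff, SimpleGraph.mem_neighborSet, Set.mem_singleton_iff]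
    constructor
    · rintro ⟨hz1, hz2⟩
      by_contra hzy
      exact hz2 (h z hz1 hzy)
    · rintro rfl
      exact ⟨hxy, hy⟩

lemma obs_empty : Obs G (∅ : Set V) = ∅ := by
  apply Set.eq_empty_of_subset_empty
  apply obs_subset_closed
  · intro x hx
    simp [closedNbhd] at hx
  · intro x hx
    exact absurd hx (Set.notMem_empty x)

lemma obs_disjoint_fort {F : Set V}
    (h1 : ∀ x ∈ closedNbhd G S, x ∉ F)
    (h2 : ∀ x, x ∉ F → ∀ y ∈ F, G.Adj x y → ∃ z ∈ F, G.Adj x z ∧ z ≠ y) :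
    ∀ x ∈ Obs G S, x ∉ F := by
  have hsub : Obs G S ⊆ Fᶜ := by
    apply obs_subset_closed
    · intro x hx; exact h1 x hx
    · intro x hx y hy
      have hyF : y ∈ F := by
        have : y ∈ G.neighborSet x \ Fᶜ := by rw [hy]; exact rfl
        simpa using this.2
      have hadj : G.Adj x y := by
        have : y ∈ G.neighborSet x \ Fᶜ := by rw [hy]; exact rfl
        exact this.1
      obtain ⟨z, hzF, hzadj, hzy⟩ := h2 x hx y hyF hadj
      have : z ∈ G.neighborSet x \ Fᶜ := ⟨hzadj, by simpa using hzF⟩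
      rw [hy] at this
      exact absurd this hzy
  exact fun x hx => by simpa using hsub hx
end basics

section adj
variable {s ℓ : ℕ} {M : Fin (s - 1) → Fin s → Fin s}

lemma adj_cases (hM1 : ∀ j, Function.Involutive (M j))
    {i : Fin s} {c : Fin (ℓ + 2*s)} {y : Fin s × Fin (ℓ + 2*s)}
    (h : (rowColGraph s ℓ M).Adj (i, c) y) :
    (y.1 = i ∧ ((y.2 : ℕ) = (c : ℕ) + 1 ∨ (y.2 : ℕ) + 1 = (c : ℕ))) ∨
    ((c : ℕ) = 1 ∧ (y.2 : ℕ) = 1 ∧ y.1 ≠ i) ∨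
    (∃ j : Fin (s - 1), (c : ℕ) = 2 * (j : ℕ) + 3 ∧ (y.2 : ℕ) = 2 * (j : ℕ) + 3 ∧
      y.1 = M j i) := by
  rw [rowColGraph, SimpleGraph.fromRel_adj] at h
  obtain ⟨hne, h | h⟩ := h <;> dsimp only at h <;>
    rcases h with ⟨h1, h2⟩ | ⟨h1, h2⟩ | ⟨j, h1, h2, h3⟩
  · exact Or.inl ⟨h1.symm, Or.inl h2⟩
  · refine Or.inr (Or.inl ⟨h1, h2, fun he => hne (Prod.ext he.symm (Fin.ext (show (c:ℕ) = (y.2:ℕ) by omega)))⟩)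
  · exact Or.inr (Or.inr ⟨j, h1, h2, h3.symm⟩)
  · exact Or.inl ⟨h1, Or.inr (by omega)⟩
  · refine Or.inr (Or.inl ⟨h2, h1, fun he => hne (Prod.ext he.symm (Fin.ext (show (c:ℕ) = (y.2:ℕ) by omega)))⟩)
  · exact Or.inr (Or.inr ⟨j, h2, h1, by rw [← h3]; exact (hM1 j y.1).symm⟩)

lemma adj_horiz (i : Fin s) {c c' : Fin (ℓ + 2*s)} (h : (c' : ℕ) = (c : ℕ) + 1) :
    (rowColGraph s ℓ M).Adj (i, c) (i, c') := by
  rw [rowColGraph, SimpleGraph.fromRel_adj]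
  exact ⟨fun he => by have : c = c' := congrArg Prod.snd he; subst this; omega,
    Or.inl (Or.inl ⟨rfl, h⟩)⟩

lemma adj_clique {i i' : Fin s} (hii : i ≠ i') {c c' : Fin (ℓ + 2*s)}
    (h : (c : ℕ) = 1) (h' : (c' : ℕ) = 1) :
    (rowColGraph s ℓ M).Adj (i, c) (i', c') := by
  rw [rowColGraph, SimpleGraph.fromRel_adj]
  exact ⟨fun he => hii (congrArg Prod.fst he), Or.inl (Or.inr (Or.inl ⟨h, h'⟩))⟩

lemma adj_match (hM2 : ∀ j i, M j i ≠ i) (j : Fin (s-1)) (i : Fin s)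
    {c c' : Fin (ℓ + 2*s)}
    (h : (c : ℕ) = 2 * (j : ℕ) + 3) (h' : (c' : ℕ) = 2 * (j : ℕ) + 3) :
    (rowColGraph s ℓ M).Adj (i, c) (M j i, c') := by
  rw [rowColGraph, SimpleGraph.fromRel_adj]
  exact ⟨fun he => hM2 j i (congrArg Prod.fst he).symm,
    Or.inl (Or.inr (Or.inr ⟨j, h, h', rfl⟩))⟩

end adj

section sside
variable {s ℓ : ℕ} {M : Fin (s - 1) → Fin s → Fin s}

/-- P1: if the PMU `(i, 2s-1)` belongs to `W`, then the whole tail of row `i`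
(columns `≥ 2s-2`) is observed. -/
lemma obs_row_tail (hM1 : ∀ j, Function.Involutive (M j)) (hs : 4 ≤ s)
    {W : Set (Fin s × Fin (ℓ + 2*s))} {i : Fin s}
    {cS : Fin (ℓ + 2*s)} (hcS : (cS : ℕ) = 2*s - 1) (hi : (i, cS) ∈ W) :
    ∀ c : Fin (ℓ + 2*s), 2*s - 2 ≤ (c : ℕ) → (i, c) ∈ Obs (rowColGraph s ℓ M) W := by
  have hη : 2*s - 1 < ℓ + 2*s := by omega
  have main : ∀ n : ℕ, ∀ c : Fin (ℓ + 2*s), (c : ℕ) = 2*s - 2 + n →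
      (i, c) ∈ Obs (rowColGraph s ℓ M) W := by
    intro n
    induction n using Nat.strong_induction_on with
    | _ n IH =>
      intro c hc
      by_cases h3 : 3 ≤ n
      · -- forcing step along the row
        have hcη : (c : ℕ) < ℓ + 2*s := c.isLt
        set cp : Fin (ℓ + 2*s) := ⟨2*s - 2 + (n-1), by omega⟩ with hcp
        have hxobs : (i, cp) ∈ Obs (rowColGraph s ℓ M) W := IH (n-1) (by omega) cp rfl
        have hadj : (rowColGraph s ℓ M).Adj (i, cp) (i, c) :=
          adj_horiz i (by simp [hcp]; omega)
        apply obs_force _ _ hxobs hadj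
        intro z hz hzc
        rcases adj_cases hM1 hz with ⟨hz1, hz2 | hz2⟩ | ⟨h1, _, _⟩ | ⟨j, h1, _, _⟩
        · -- z = (i, c), contradiction
          exfalso
          apply hzc
          have : z.2 = c := Fin.ext (by simp [hcp] at hz2; omega)
          rw [← hz1, ← this]
        · -- z = (i, cp - 1)
          have hz2' : (z.2 : ℕ) = 2*s - 2 + (n - 2) := by simp [hcp] at hz2; omega
          have : z = (i, z.2) := Prod.ext hz1 rfl
          rw [this]
          exact IH (n-2) (by omega) z.2 hz2'
        · exfalso; simp [hcp] at h1; omega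
        · exfalso
          have := j.isLt
          simp [hcp] at h1; omega
      · -- base cases n = 0, 1, 2
        have hcv : (c : ℕ) = 2*s - 2 + n := hc
        rcases (by omega : n = 0 ∨ n = 1 ∨ n = 2) with rfl | rfl | rfl
        · exact mem_obs_of_adj _ W hi ((adj_horiz i (by omega)).symm)
        · have : c = cS := Fin.ext (by omega)
          rw [this]; exact mem_obs_of_mem _ W hi
        · exact mem_obs_of_adj _ W hi (adj_horiz i (by omega))
  intro c hcge
  exact main ((c : ℕ) - (2*s - 2)) c (by omega)

end sside

section sside2
variable {s ℓ : ℕ} {M : Fin (s - 1) → Fin s → Fin s}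

/-- P2: if `W` contains the full last pairing column `{(i, 2s-1)}`, everything is observed. -/
lemma obs_full (hM1 : ∀ j, Function.Involutive (M j)) (hs : 4 ≤ s)
    {W : Set (Fin s × Fin (ℓ + 2*s))}
    (hW : ∀ i : Fin s, ∃ cS : Fin (ℓ + 2*s), (cS : ℕ) = 2*s - 1 ∧ (i, cS) ∈ W) :
    Obs (rowColGraph s ℓ M) W = Set.univ := by
  have tail : ∀ (i : Fin s) (c : Fin (ℓ + 2*s)), 2*s - 2 ≤ (c : ℕ) →
      (i, c) ∈ Obs (rowColGraph s ℓ M) W := by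
    intro i c hc
    obtain ⟨cS, hcS, hi⟩ := hW i
    exact obs_row_tail hM1 hs hcS hi c hc
  have Q : ∀ m : ℕ, ∀ (i : Fin s) (c : Fin (ℓ + 2*s)), 2*s - 2 ≤ (c : ℕ) + m →
      (i, c) ∈ Obs (rowColGraph s ℓ M) W := by
    intro m
    induction m with
    | zero => intro i c hc; exact tail i c (by omega)
    | succ m IH =>
      intro i c hc
      by_cases hm : 2*s - 2 ≤ (c : ℕ) + m
      · exact IH i c hm
      · have hceq : (c : ℕ) + m + 1 = 2*s - 2 := by omega
        have hcη : (c : ℕ) + 1 < ℓ + 2*s := by omega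
        set cp : Fin (ℓ + 2*s) := ⟨(c : ℕ) + 1, hcη⟩ with hcp
        have hxobs : (i, cp) ∈ Obs (rowColGraph s ℓ M) W := IH i cp (by simp [hcp]; omega)
        have hadj : (rowColGraph s ℓ M).Adj (i, cp) (i, c) :=
          (adj_horiz i (by simp [hcp])).symm
        apply obs_force _ _ hxobs hadj
        intro z hz hzc
        have hzz : z = (z.1, z.2) := rfl
        rcases adj_cases hM1 hz with ⟨hz1, hz2 | hz2⟩ | ⟨h1, h2, _⟩ | ⟨j, h1, h2, h3⟩
        · rw [hzz]; rw [hz1]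
          exact IH i z.2 (by simp [hcp] at hz2; omega)
        · exfalso
          apply hzc
          have : z.2 = c := Fin.ext (by simp [hcp] at hz2; omega)
          rw [← hz1, ← this]
        · rw [hzz]
          exact IH z.1 z.2 (by simp [hcp] at h1; omega)
        · rw [hzz]
          exact IH z.1 z.2 (by simp [hcp] at h1; omega)
  ext x
  simp only [Set.mem_univ, iff_true]
  have := Q (2*s) x.1 x.2 (by omega)
  rwa [show (x.1, x.2) = x from rfl] at this

end sside2

section aside
variable {s ℓ : ℕ} {M : Fin (s - 1) → Fin s → Fin s}

/-- P3: any observed vertex in a tail column (`≥ 2s`) lies in a row containing a PMU. -/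
lemma obs_tail_charged (hM1 : ∀ j, Function.Involutive (M j)) (hs : 4 ≤ s) (hl : 1 ≤ ℓ)
    (W : Finset (Fin s × Fin (ℓ + 2*s))) :
    ∀ x ∈ Obs (rowColGraph s ℓ M) ↑W, 2*s ≤ (x.2 : ℕ) → x.1 ∈ W.image Prod.fst := by
  classical
  set C : Finset (Fin s) := W.image Prod.fst with hC
  set F : Set (Fin s × Fin (ℓ + 2*s)) :=
    {x | x.1 ∉ C ∧ (x.2 : ℕ) ≠ 1 ∧
      ∀ j : Fin (s-1), (x.2 : ℕ) = 2*(j : ℕ)+3 → M j x.1 ∉ C} with hF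
  have hmemF : ∀ x : Fin s × Fin (ℓ + 2*s), x ∈ F ↔ (x.1 ∉ C ∧ (x.2 : ℕ) ≠ 1 ∧
      ∀ j : Fin (s-1), (x.2 : ℕ) = 2*(j : ℕ)+3 → M j x.1 ∉ C) := fun x => Iff.rfl
  have hfst : ∀ v ∈ W, Prod.fst v ∈ C := fun v hv => Finset.mem_image_of_mem _ hv
  have key : ∀ x ∈ Obs (rowColGraph s ℓ M) ↑W, x ∉ F := by
    apply obs_disjoint_fort
    · -- avoidance
      intro x hx
      simp only [closedNbhd, Set.mem_iUnion, Set.mem_insert_iff] at hx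
      obtain ⟨v, hv, hveq | hvadj⟩ := hx
      · intro hxF
        have hvC := hfst v hv
        rw [← hveq] at hvC
        exact ((hmemF x).1 hxF).1 hvC
      · intro hxF
        obtain ⟨hx1, hx2, hx3⟩ := (hmemF x).1 hxF
        rcases adj_cases hM1 (show (rowColGraph s ℓ M).Adj (v.1, v.2) x from hvadj) with
          ⟨h1, _⟩ | ⟨_, h2, _⟩ | ⟨j, _, h2, h3⟩
        · exact hx1 (h1 ▸ hfst v hv)
        · exact hx2 h2
        · exact hx3 j h2 (by rw [h3, hM1 j]; exact hfst v hv)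
    · -- fort property
      intro x hxF y hyF hadj
      obtain ⟨hy1, hy2, hy3⟩ := (hmemF y).1 hyF
      by_cases hw : x.1 ∈ C
      · exfalso
        rcases adj_cases hM1 hadj with ⟨h1, _⟩ | ⟨_, h2, _⟩ | ⟨j, h1, h2, h3⟩
        · exact hy1 (h1 ▸ hw)
        · exact hy2 h2
        · exact hy3 j h2 (by rw [h3, hM1 j]; exact hw)
      · by_cases hc1 : (x.2 : ℕ) = 1
        · -- clique column: use (x.1, 0) and (x.1, 2)
          have h0 : (0:ℕ) < ℓ + 2*s := by omega
          have h2' : (2:ℕ) < ℓ + 2*s := by omega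
          refine ?_
          set z₁ : Fin s × Fin (ℓ + 2*s) := (x.1, ⟨0, h0⟩) with hz₁
          set z₂ : Fin s × Fin (ℓ + 2*s) := (x.1, ⟨2, h2'⟩) with hz₂
          have hz₁F : z₁ ∈ F := (hmemF z₁).2 ⟨hw, show (0:ℕ) ≠ 1 by omega,
            fun j hj => absurd (show (0:ℕ) = 2*(j:ℕ)+3 from hj) (by omega)⟩
          have hz₂F : z₂ ∈ F := (hmemF z₂).2 ⟨hw, show (2:ℕ) ≠ 1 by omega,
            fun j hj => absurd (show (2:ℕ) = 2*(j:ℕ)+3 from hj) (by omega)⟩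
          have ha₁ : (rowColGraph s ℓ M).Adj x z₁ :=
            (adj_horiz x.1 (show (x.2:ℕ) = 0 + 1 by omega)).symm
          have ha₂ : (rowColGraph s ℓ M).Adj x z₂ :=
            adj_horiz x.1 (show ((2:ℕ)) = (x.2:ℕ) + 1 by omega)
          by_cases hy : y = z₁
          · refine ⟨z₂, hz₂F, ha₂, fun he => ?_⟩
            have : (2:ℕ) = 0 := congrArg (fun t : Fin s × Fin (ℓ+2*s) => (t.2:ℕ)) (he.trans hy)
            omega
          · exact ⟨z₁, hz₁F, ha₁, fun he => hy he.symm⟩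
        · -- matching column with partner charged
          have hex : ∃ j : Fin (s-1), (x.2 : ℕ) = 2*(j : ℕ)+3 ∧ M j x.1 ∈ C := by
            by_contra hno
            push_neg at hno
            exact hxF ((hmemF x).2 ⟨hw, hc1, hno⟩)
          obtain ⟨j, hj1, hj2⟩ := hex
          have hjlt := j.isLt
          have hb₁ : 2*(j:ℕ)+2 < ℓ + 2*s := by omega
          have hb₂ : 2*(j:ℕ)+4 < ℓ + 2*s := by omega
          set z₁ : Fin s × Fin (ℓ + 2*s) := (x.1, ⟨2*(j:ℕ)+2, hb₁⟩) with hz₁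
          set z₂ : Fin s × Fin (ℓ + 2*s) := (x.1, ⟨2*(j:ℕ)+4, hb₂⟩) with hz₂
          have hz₁F : z₁ ∈ F := (hmemF z₁).2 ⟨hw, show 2*(j:ℕ)+2 ≠ 1 by omega,
            fun j' hj' => absurd (show 2*(j:ℕ)+2 = 2*(j':ℕ)+3 from hj') (by omega)⟩
          have hz₂F : z₂ ∈ F := (hmemF z₂).2 ⟨hw, show 2*(j:ℕ)+4 ≠ 1 by omega,
            fun j' hj' => absurd (show 2*(j:ℕ)+4 = 2*(j':ℕ)+3 from hj') (by omega)⟩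
          have ha₁ : (rowColGraph s ℓ M).Adj x z₁ :=
            (adj_horiz x.1 (show (x.2:ℕ) = (2*(j:ℕ)+2) + 1 by omega)).symm
          have ha₂ : (rowColGraph s ℓ M).Adj x z₂ :=
            adj_horiz x.1 (show 2*(j:ℕ)+4 = (x.2:ℕ) + 1 by omega)
          by_cases hy : y = z₁
          · refine ⟨z₂, hz₂F, ha₂, fun he => ?_⟩
            have : 2*(j:ℕ)+4 = 2*(j:ℕ)+2 :=
              congrArg (fun t : Fin s × Fin (ℓ+2*s) => (t.2:ℕ)) (he.trans hy)
            omega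
          · exact ⟨z₁, hz₁F, ha₁, fun he => hy he.symm⟩
  intro x hx htail
  by_contra hnot
  apply key x hx
  refine (hmemF x).2 ⟨hnot, by omega, fun j hj => ?_⟩
  have := j.isLt
  omega

end aside

section aside2
variable {s ℓ : ℕ} {M : Fin (s - 1) → Fin s → Fin s}

/-- P4: if the only PMU in row `r` is the clique-column PMU `(r,1)` and some row `u` has
no PMU, then no tail vertex of row `r` is ever observed (in addition to P3). -/
lemma obs_tail_charged_kappa (hM1 : ∀ j, Function.Involutive (M j))
    (hM2 : ∀ j i, M j i ≠ i) (hs : 4 ≤ s) (hl : 1 ≤ ℓ)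
    (W : Finset (Fin s × Fin (ℓ + 2*s))) {r : Fin s} {c1 : Fin (ℓ + 2*s)}
    (hc1 : (c1 : ℕ) = 1) (hκW : (r, c1) ∈ W)
    (hrow : ∀ p ∈ W, p.1 = r → p = (r, c1))
    {u : Fin s} (hu : u ∉ W.image Prod.fst)
    {jst : Fin (s-1)} (hjst : M jst u = r) :
    ∀ x ∈ Obs (rowColGraph s ℓ M) ↑W, 2*s ≤ (x.2 : ℕ) →
      x.1 ∈ (W.image Prod.fst).erase r := by
  classical
  set C : Finset (Fin s) := W.image Prod.fst with hC
  have hfst : ∀ v ∈ W, Prod.fst v ∈ C := fun v hv => Finset.mem_image_of_mem _ hv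
  have hrC : r ∈ C := hfst (r, c1) hκW
  have hur : u ≠ r := fun h => hu (h ▸ hrC)
  have hjstr : M jst r = u := by rw [← hjst]; exact hM1 jst u
  have hjlt := jst.isLt
  have hcstar : 2*(jst:ℕ)+3 < ℓ + 2*s := by omega
  set ustar : Fin s × Fin (ℓ + 2*s) := (u, ⟨2*(jst:ℕ)+3, hcstar⟩) with hustar
  set F : Set (Fin s × Fin (ℓ + 2*s)) :=
    {x | (x.1 ∉ C ∧ (x.2 : ℕ) ≠ 1 ∧
            (∀ j : Fin (s-1), (x.2 : ℕ) = 2*(j : ℕ)+3 → M j x.1 ∉ C)) ∨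
         x = ustar ∨
         (x.1 = r ∧ 2*(jst:ℕ)+3 < (x.2 : ℕ) ∧
            ((x.2 : ℕ) % 2 = 0 ∨ 2*s ≤ (x.2 : ℕ)))} with hF
  have hmemF : ∀ x : Fin s × Fin (ℓ + 2*s), x ∈ F ↔
      ((x.1 ∉ C ∧ (x.2 : ℕ) ≠ 1 ∧
            (∀ j : Fin (s-1), (x.2 : ℕ) = 2*(j : ℕ)+3 → M j x.1 ∉ C)) ∨
         x = ustar ∨
         (x.1 = r ∧ 2*(jst:ℕ)+3 < (x.2 : ℕ) ∧
            ((x.2 : ℕ) % 2 = 0 ∨ 2*s ≤ (x.2 : ℕ)))) := fun _ => Iff.rfl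
  -- `ustar` data
  have hustar1 : ustar.1 = u := rfl
  have hustar2 : (ustar.2 : ℕ) = 2*(jst:ℕ)+3 := rfl
  have key : ∀ x ∈ Obs (rowColGraph s ℓ M) ↑W, x ∉ F := by
    apply obs_disjoint_fort
    · -- avoidance
      intro x hx
      simp only [closedNbhd, Set.mem_iUnion, Set.mem_insert_iff] at hx
      obtain ⟨v, hv, hveq | hvadj⟩ := hx
      · -- x is a PMU
        intro hxF
        rcases (hmemF x).1 hxF with ⟨h1, _, _⟩ | h1 | ⟨h1, h2, _⟩
        · apply h1; rw [hveq]; exact hfst v hv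
        · apply hu
          have : v.1 = u := by rw [← hveq, h1]
          exact this ▸ hfst v hv
        · -- x = v in row r, so v = κ, column 1, contradiction with col > 3
          have hvr : v = (r, c1) := hrow v hv (by rw [← hveq]; exact h1)
          have : (x.2 : ℕ) = 1 := by rw [hveq, hvr]; exact hc1
          omega
      · -- x is adjacent to a PMU
        intro hxF
        rcases adj_cases hM1 (show (rowColGraph s ℓ M).Adj (v.1, v.2) x from hvadj) with
          ⟨h1, h2⟩ | ⟨h1, h2, _⟩ | ⟨j, h1, h2, h3⟩
        · -- same row as the PMU
          rcases (hmemF x).1 hxF with ⟨g1, _, _⟩ | g1 | ⟨g1, g2, _⟩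
          · exact g1 (h1 ▸ hfst v hv)
          · apply hu
            have : v.1 = u := by rw [← h1, g1]
            exact this ▸ hfst v hv
          · have hvr : v = (r, c1) := hrow v hv (by rw [← h1]; exact g1)
            have hv2 : (v.2 : ℕ) = 1 := by rw [hvr]; exact hc1
            omega
        · -- clique column
          rcases (hmemF x).1 hxF with ⟨_, g2, _⟩ | g1 | ⟨_, g2, _⟩
          · exact g2 h2
          · have : (x.2 : ℕ) = 2*(jst:ℕ)+3 := by rw [g1]
            omega
          · omega
        · -- matching column
          rcases (hmemF x).1 hxF with ⟨_, _, g3⟩ | g1 | ⟨_, _, g3⟩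
          · exact g3 j h2 (by rw [h3, hM1 j]; exact hfst v hv)
          · -- x = ustar: then the PMU is in row r with col ≥ 3: contradiction
            have hju : M j v.1 = u := by rw [← h3, g1]
            have hjj : j = jst := by
              apply Fin.ext
              have : (x.2 : ℕ) = 2*(jst:ℕ)+3 := by rw [g1]
              omega
            have hvr : v.1 = r := by
              rw [← hjst, ← hju, hjj, hM1 jst]
            have hvκ : v = (r, c1) := hrow v hv hvr
            have hv2 : (v.2 : ℕ) = 1 := by rw [hvκ]; exact hc1
            omega
          · omega
    · -- fort property
      intro x hxF y hyF hadj
      have hx1 : ¬(x.1 ∉ C ∧ (x.2 : ℕ) ≠ 1 ∧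
          (∀ j : Fin (s-1), (x.2 : ℕ) = 2*(j:ℕ)+3 → M j x.1 ∉ C)) :=
        fun h => hxF ((hmemF x).2 (Or.inl h))
      by_cases hxr : x.1 = r
      · -- row r
        have hD0 : ¬(2*(jst:ℕ)+3 < (x.2:ℕ) ∧ ((x.2:ℕ) % 2 = 0 ∨ 2*s ≤ (x.2:ℕ))) :=
          fun h => hxF ((hmemF x).2 (Or.inr (Or.inr ⟨hxr, h.1, h.2⟩)))
        rcases (by omega : (x.2 : ℕ) < 2*(jst:ℕ)+3 ∨ (x.2 : ℕ) = 2*(jst:ℕ)+3 ∨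
            (2*(jst:ℕ)+3 < (x.2 : ℕ) ∧ (x.2:ℕ) % 2 = 1 ∧ (x.2:ℕ) < 2*s)) with hD | hD | hD
        · -- D1: left of cstar: no neighbour can be in F
          exfalso
          rcases adj_cases hM1 hadj with ⟨h1, h2⟩ | ⟨h1, h2, _⟩ | ⟨j, h1, h2, h3⟩
          · -- same row
            rcases (hmemF y).1 hyF with ⟨g1, _, _⟩ | g1 | ⟨_, g2, _⟩
            · exact g1 (by rw [h1, hxr]; exact hrC)
            · have : y.1 = u := by rw [g1]
              rw [h1, hxr] at this
              exact hur this.symm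
            · omega
          · -- clique
            rcases (hmemF y).1 hyF with ⟨_, g2, _⟩ | g1 | ⟨_, g2, _⟩
            · exact g2 h2
            · have : (y.2 : ℕ) = 2*(jst:ℕ)+3 := by rw [g1]
              omega
            · omega
          · -- matching
            rcases (hmemF y).1 hyF with ⟨_, _, g3⟩ | g1 | ⟨_, g2, g4⟩
            · exact g3 j h2 (by rw [h3, hxr, hM1 j]; exact hrC)
            · have : (y.2 : ℕ) = 2*(jst:ℕ)+3 := by rw [g1]
              omega
            · have := j.isLt
              omega
        · -- D2: x = (r, cstar): use ustar and (r, cstar+1)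
          have hb2 : 2*(jst:ℕ)+4 < ℓ + 2*s := by omega
          set z₂ : Fin s × Fin (ℓ + 2*s) := (x.1, ⟨2*(jst:ℕ)+4, hb2⟩) with hz₂
          have hz₂F : z₂ ∈ F := (hmemF z₂).2 (Or.inr (Or.inr ⟨hxr,
            show 2*(jst:ℕ)+3 < 2*(jst:ℕ)+4 by omega,
            Or.inl (show (2*(jst:ℕ)+4) % 2 = 0 by omega)⟩))
          have ha₂ : (rowColGraph s ℓ M).Adj x z₂ :=
            adj_horiz x.1 (show 2*(jst:ℕ)+4 = (x.2:ℕ) + 1 by omega)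
          have hz₁F : (M jst x.1, (⟨2*(jst:ℕ)+3, hcstar⟩ : Fin (ℓ+2*s))) ∈ F := by
            refine (hmemF _).2 (Or.inr (Or.inl ?_))
            rw [hustar]
            rw [hxr, hjstr]
          have ha₁ : (rowColGraph s ℓ M).Adj x (M jst x.1, ⟨2*(jst:ℕ)+3, hcstar⟩) :=
            adj_match hM2 jst x.1 (show (x.2:ℕ) = 2*(jst:ℕ)+3 from hD) rfl
          by_cases hy : y = (M jst x.1, (⟨2*(jst:ℕ)+3, hcstar⟩ : Fin (ℓ+2*s)))
          · refine ⟨z₂, hz₂F, ha₂, fun he => ?_⟩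
            have : 2*(jst:ℕ)+4 = 2*(jst:ℕ)+3 :=
              congrArg (fun t : Fin s × Fin (ℓ+2*s) => (t.2:ℕ)) (he.trans hy)
            omega
          · exact ⟨_, hz₁F, ha₁, fun he => hy he.symm⟩
        · -- D3: odd column beyond cstar, below 2s: neighbours (x.1, c±1) in the r-part
          obtain ⟨hD1, hD2, hD3⟩ := hD
          have hbm : (x.2:ℕ) - 1 < ℓ + 2*s := by omega
          have hbp : (x.2:ℕ) + 1 < ℓ + 2*s := by omega
          set z₁ : Fin s × Fin (ℓ + 2*s) := (x.1, ⟨(x.2:ℕ) - 1, hbm⟩) with hz₁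
          set z₂ : Fin s × Fin (ℓ + 2*s) := (x.1, ⟨(x.2:ℕ) + 1, hbp⟩) with hz₂
          have hz₁F : z₁ ∈ F := (hmemF z₁).2 (Or.inr (Or.inr ⟨hxr,
            show 2*(jst:ℕ)+3 < (x.2:ℕ) - 1 by omega,
            Or.inl (show ((x.2:ℕ) - 1) % 2 = 0 by omega)⟩))
          have hz₂F : z₂ ∈ F := (hmemF z₂).2 (Or.inr (Or.inr ⟨hxr,
            show 2*(jst:ℕ)+3 < (x.2:ℕ) + 1 by omega,
            Or.inl (show ((x.2:ℕ) + 1) % 2 = 0 by omega)⟩))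
          have ha₁ : (rowColGraph s ℓ M).Adj x z₁ :=
            (adj_horiz x.1 (show (x.2:ℕ) = ((x.2:ℕ) - 1) + 1 by omega)).symm
          have ha₂ : (rowColGraph s ℓ M).Adj x z₂ :=
            adj_horiz x.1 (show (x.2:ℕ) + 1 = (x.2:ℕ) + 1 from rfl)
          by_cases hy : y = z₁
          · refine ⟨z₂, hz₂F, ha₂, fun he => ?_⟩
            have : (x.2:ℕ) + 1 = (x.2:ℕ) - 1 :=
              congrArg (fun t : Fin s × Fin (ℓ+2*s) => (t.2:ℕ)) (he.trans hy)
            omega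
          · exact ⟨z₁, hz₁F, ha₁, fun he => hy he.symm⟩
      · by_cases hw : x.1 ∈ C
        · -- case A: charged row other than r: no neighbour in F
          exfalso
          rcases adj_cases hM1 hadj with ⟨h1, h2⟩ | ⟨h1, h2, _⟩ | ⟨j, h1, h2, h3⟩
          · rcases (hmemF y).1 hyF with ⟨g1, _, _⟩ | g1 | ⟨g1, _, _⟩
            · exact g1 (h1 ▸ hw)
            · have : y.1 = u := by rw [g1]
              rw [h1] at this
              exact hu (this ▸ hw)
            · exact hxr (by rw [← h1]; exact g1)
          · rcases (hmemF y).1 hyF with ⟨_, g2, _⟩ | g1 | ⟨_, g2, _⟩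
            · exact g2 h2
            · have : (y.2 : ℕ) = 2*(jst:ℕ)+3 := by rw [g1]
              omega
            · omega
          · rcases (hmemF y).1 hyF with ⟨_, _, g3⟩ | g1 | ⟨_, g2, g4⟩
            · exact g3 j h2 (by rw [h3, hM1 j]; exact hw)
            · -- y = ustar: then x.1 = r, contradiction
              apply hxr
              have hju : M j x.1 = u := by rw [← h3, g1]
              have hjj : j = jst := by
                apply Fin.ext
                have : (y.2 : ℕ) = 2*(jst:ℕ)+3 := by rw [g1]
                omega
              have : x.1 = M jst u := by rw [← hju, hjj, hM1 jst]
              rw [this, hjst]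
            · have := j.isLt
              omega
        · -- uncharged row: as in the generic fort
          by_cases hc1' : (x.2 : ℕ) = 1
          · have h0 : (0:ℕ) < ℓ + 2*s := by omega
            have h2' : (2:ℕ) < ℓ + 2*s := by omega
            set z₁ : Fin s × Fin (ℓ + 2*s) := (x.1, ⟨0, h0⟩) with hz₁
            set z₂ : Fin s × Fin (ℓ + 2*s) := (x.1, ⟨2, h2'⟩) with hz₂
            have hz₁F : z₁ ∈ F := (hmemF z₁).2 (Or.inl ⟨hw, show (0:ℕ) ≠ 1 by omega,
              fun j hj => absurd (show (0:ℕ) = 2*(j:ℕ)+3 from hj) (by omega)⟩)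
            have hz₂F : z₂ ∈ F := (hmemF z₂).2 (Or.inl ⟨hw, show (2:ℕ) ≠ 1 by omega,
              fun j hj => absurd (show (2:ℕ) = 2*(j:ℕ)+3 from hj) (by omega)⟩)
            have ha₁ : (rowColGraph s ℓ M).Adj x z₁ :=
              (adj_horiz x.1 (show (x.2:ℕ) = 0 + 1 by omega)).symm
            have ha₂ : (rowColGraph s ℓ M).Adj x z₂ :=
              adj_horiz x.1 (show ((2:ℕ)) = (x.2:ℕ) + 1 by omega)
            by_cases hy : y = z₁
            · refine ⟨z₂, hz₂F, ha₂, fun he => ?_⟩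
              have : (2:ℕ) = 0 := congrArg (fun t : Fin s × Fin (ℓ+2*s) => (t.2:ℕ)) (he.trans hy)
              omega
            · exact ⟨z₁, hz₁F, ha₁, fun he => hy he.symm⟩
          · have hex : ∃ j : Fin (s-1), (x.2 : ℕ) = 2*(j : ℕ)+3 ∧ M j x.1 ∈ C := by
              by_contra hno
              push_neg at hno
              exact hx1 ⟨hw, hc1', hno⟩
            obtain ⟨j, hj1, hj2⟩ := hex
            have hjlt2 := j.isLt
            have hb₁ : 2*(j:ℕ)+2 < ℓ + 2*s := by omega
            have hb₂ : 2*(j:ℕ)+4 < ℓ + 2*s := by omega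
            set z₁ : Fin s × Fin (ℓ + 2*s) := (x.1, ⟨2*(j:ℕ)+2, hb₁⟩) with hz₁
            set z₂ : Fin s × Fin (ℓ + 2*s) := (x.1, ⟨2*(j:ℕ)+4, hb₂⟩) with hz₂
            have hz₁F : z₁ ∈ F := (hmemF z₁).2 (Or.inl ⟨hw, show 2*(j:ℕ)+2 ≠ 1 by omega,
              fun j' hj' => absurd (show 2*(j:ℕ)+2 = 2*(j':ℕ)+3 from hj') (by omega)⟩)
            have hz₂F : z₂ ∈ F := (hmemF z₂).2 (Or.inl ⟨hw, show 2*(j:ℕ)+4 ≠ 1 by omega,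
              fun j' hj' => absurd (show 2*(j:ℕ)+4 = 2*(j':ℕ)+3 from hj') (by omega)⟩)
            have ha₁ : (rowColGraph s ℓ M).Adj x z₁ :=
              (adj_horiz x.1 (show (x.2:ℕ) = (2*(j:ℕ)+2) + 1 by omega)).symm
            have ha₂ : (rowColGraph s ℓ M).Adj x z₂ :=
              adj_horiz x.1 (show 2*(j:ℕ)+4 = (x.2:ℕ) + 1 by omega)
            by_cases hy : y = z₁
            · refine ⟨z₂, hz₂F, ha₂, fun he => ?_⟩
              have : 2*(j:ℕ)+4 = 2*(j:ℕ)+2 :=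
                congrArg (fun t : Fin s × Fin (ℓ+2*s) => (t.2:ℕ)) (he.trans hy)
              omega
            · exact ⟨z₁, hz₁F, ha₁, fun he => hy he.symm⟩
  -- conclusion
  intro x hx htail
  by_contra hnot
  apply key x hx
  by_cases hxr : x.1 = r
  · exact (hmemF x).2 (Or.inr (Or.inr ⟨hxr, by omega, Or.inr htail⟩))
  · refine (hmemF x).2 (Or.inl ⟨?_, by omega, fun j hj => ?_⟩)
    · intro hxC
      exact hnot (Finset.mem_erase.2 ⟨hxr, hxC⟩)
    · have := j.isLt
      omega

end aside2

section counting
variable {n : ℕ}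

lemma card_filter_ge (a : ℕ) (ha : a < n) :
    (Finset.univ.filter fun c : Fin n => a ≤ (c : ℕ)).card = n - a := by
  have he : (Finset.univ.filter fun c : Fin n => a ≤ (c : ℕ)) = Finset.Ici (⟨a, ha⟩ : Fin n) := by
    ext c
    simp [Fin.le_def]
  rw [he, Fin.card_Ici]

lemma card_filter_lt (a : ℕ) (ha : a < n) :
    (Finset.univ.filter fun c : Fin n => (c : ℕ) < a).card = a := by
  have he : (Finset.univ.filter fun c : Fin n => (c : ℕ) < a) = Finset.Iio (⟨a, ha⟩ : Fin n) := by
    ext c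
    simp [Fin.lt_def]
  rw [he, Fin.card_Iio]

end counting

section identities
variable {α : Type*} [DecidableEq α]

lemma psum_one (A : Finset α) (p q : ℝ) (hpq : p + q = 1) :
    ∑ W ∈ A.powerset, q ^ (A.card - W.card) * p ^ W.card = 1 := by
  have h := Finset.prod_add (fun _ : α => p) (fun _ : α => q) A
  simp only [Finset.prod_const] at h
  have h2 : ∀ W ∈ A.powerset, p ^ W.card * q ^ (A \ W).card
      = q ^ (A.card - W.card) * p ^ W.card := by
    intro W hW
    rw [Finset.card_sdiff_of_subset (Finset.mem_powerset.mp hW), mul_comm]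
  rw [← Finset.sum_congr rfl h2, ← h, hpq, one_pow]

lemma psum_mem (A : Finset α) {a : α} (ha : a ∈ A) (p q : ℝ) (hpq : p + q = 1) :
    ∑ W ∈ A.powerset, (if a ∈ W then q ^ (A.card - W.card) * p ^ W.card else 0)
      = p := by
  classical
  have hins : A = insert a (A.erase a) := (Finset.insert_erase ha).symm
  have hnotmem : a ∉ A.erase a := Finset.notMem_erase a A
  have hAcard : (insert a (A.erase a)).card = A.card := by rw [← hins]
  rw [hins, Finset.sum_powerset_insert hnotmem]
  have h1 : ∀ t ∈ (A.erase a).powerset,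
      (if a ∈ t then q ^ ((insert a (A.erase a)).card - t.card) * p ^ t.card else 0) = 0 := by
    intro t ht
    rw [if_neg fun hat => hnotmem (Finset.mem_powerset.mp ht hat)]
  rw [Finset.sum_congr rfl h1, Finset.sum_const_zero, zero_add]
  have h2 : ∀ t ∈ (A.erase a).powerset,
      (if a ∈ insert a t then
        q ^ ((insert a (A.erase a)).card - (insert a t).card) * p ^ (insert a t).card else 0)
      = (q ^ ((A.erase a).card - t.card) * p ^ t.card) * p := by
    intro t ht
    have hat : a ∉ t := fun hat => hnotmem (Finset.mem_powerset.mp ht hat)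
    have htc : t.card ≤ (A.erase a).card := Finset.card_le_card (Finset.mem_powerset.mp ht)
    have hec : (A.erase a).card = A.card - 1 := Finset.card_erase_of_mem ha
    have hle : 1 ≤ A.card := Finset.card_pos.mpr ⟨a, ha⟩
    rw [if_pos (Finset.mem_insert_self a t), Finset.card_insert_of_notMem hat, hAcard]
    rw [show A.card - (t.card + 1) = (A.erase a).card - t.card by omega]
    rw [pow_succ]
    ring
  rw [Finset.sum_congr rfl h2, ← Finset.sum_mul, psum_one (A.erase a) p q hpq, one_mul]

lemma psum_card (A : Finset α) (p q : ℝ) (hpq : p + q = 1) :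
    ∑ W ∈ A.powerset, (W.card : ℝ) * (q ^ (A.card - W.card) * p ^ W.card)
      = A.card * p := by
  classical
  have hcard : ∀ W ∈ A.powerset, (W.card : ℝ)
      = ∑ a ∈ A, (if a ∈ W then (1:ℝ) else 0) := by
    intro W hW
    rw [Finset.sum_ite_mem, Finset.sum_const]
    have : A ∩ W = W := Finset.inter_eq_right.mpr (Finset.mem_powerset.mp hW)
    rw [this]
    simp
  calc ∑ W ∈ A.powerset, (W.card : ℝ) * (q ^ (A.card - W.card) * p ^ W.card)
      = ∑ W ∈ A.powerset, ∑ a ∈ A,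
          (if a ∈ W then q ^ (A.card - W.card) * p ^ W.card else 0) := by
        refine Finset.sum_congr rfl fun W hW => ?_
        rw [hcard W hW, Finset.sum_mul]
        refine Finset.sum_congr rfl fun a _ => ?_
        split_ifs <;> simp
    _ = ∑ a ∈ A, ∑ W ∈ A.powerset,
          (if a ∈ W then q ^ (A.card - W.card) * p ^ W.card else 0) := Finset.sum_comm
    _ = ∑ a ∈ A, p := Finset.sum_congr rfl fun a ha => psum_mem A ha p q hpq
    _ = A.card * p := by rw [Finset.sum_const, nsmul_eq_mul]

end identities

section keyreal

lemma key_real (s : ℕ) (hs : 4 ≤ s) (L : ℝ) (hL : 2*(s:ℝ)^3 < L) (p q : ℝ)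
    (hp : 0 ≤ p) (hq : 0 ≤ q) (hpq : p + q = 1) :
    (L*s*p + 2*(s:ℝ)^2*(1 - q^s) - L*(p - p^s)) + p*q*(L + 2*s - 2*(s:ℝ)^3)
      ≤ (L+2)*s*p + (2*(s:ℝ)^2 - 2*s)*p^s := by
  have hq1 : q ≤ 1 := by linarith
  have hp1 : p ≤ 1 := by linarith
  set Sq : ℝ := ∑ m ∈ Finset.range s, q ^ m with hSq
  set Sp : ℝ := ∑ m ∈ Finset.range (s-1), p ^ m with hSp
  have f1 : 1 - q ^ s = p * Sq := by
    have h := geom_sum_mul q s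
    linear_combination h - Sq * hpq
  have f2 : 1 - p ^ (s-1) = q * Sp := by
    have h := geom_sum_mul p (s-1)
    linear_combination h - Sp * hpq
  have f3 : p ^ s = p * p ^ (s-1) := by
    conv_lhs => rw [show s = (s-1)+1 by omega]
    rw [pow_succ]
    ring
  have hs1 : (1:ℕ) ≤ s - 1 := by omega
  have bSp1 : 1 ≤ Sp := by
    have h0 : (0:ℕ) ∈ Finset.range (s-1) := Finset.mem_range.mpr (by omega)
    have := Finset.single_le_sum (f := fun m => p ^ m)
      (fun i _ => pow_nonneg hp i) h0
    simpa using this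
  have bSq : Sq ≤ 1 + ((s:ℝ) - 1) * q := by
    have hrw : Finset.range s = Finset.range ((s-1) + 1) := by congr 1; omega
    have h := Finset.sum_range_succ' (fun m => q ^ m) (s-1)
    rw [hSq, hrw, h]
    have hb : ∑ i ∈ Finset.range (s-1), q ^ (i+1) ≤ ∑ _i ∈ Finset.range (s-1), q := by
      refine Finset.sum_le_sum fun i _ => ?_
      calc q ^ (i+1) = q * q ^ i := by rw [pow_succ]; ring
        _ ≤ q * 1 := by
            have := pow_le_one₀ hq hq1 (n := i)
            nlinarith
        _ = q := mul_one q
    rw [Finset.sum_const, nsmul_eq_mul, Finset.card_range] at hb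
    have hcast : ((s - 1 : ℕ) : ℝ) = (s:ℝ) - 1 := by
      have h1 : (1:ℕ) ≤ s := by omega
      push_cast [Nat.cast_sub h1]
      ring
    rw [hcast] at hb
    simp only [pow_zero]
    linarith
  -- rewrite everything in terms of Sp, Sq
  have hps : p ^ (s-1) = 1 - q * Sp := by linarith
  have hqs : q ^ s = 1 - p * Sq := by linarith
  rw [hqs, f3, hps]
  have hcoef : 0 ≤ L - 2*(s:ℝ)^2 + 2*s := by
    have hs4 : (4:ℝ) ≤ (s:ℝ) := by exact_mod_cast hs
    nlinarith
  have hpq0 : 0 ≤ p*q := mul_nonneg hp hq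
  have hterm : p*q*(L - 2*(s:ℝ)^2 + 2*s) ≤ p*q*Sp*(L - 2*(s:ℝ)^2 + 2*s) := by
    nlinarith [mul_nonneg (mul_nonneg hpq0 hcoef) (sub_nonneg.mpr bSp1)]
  have hterm2 : (2*(s:ℝ)^2*p) * Sq ≤ (2*(s:ℝ)^2*p) * (1 + ((s:ℝ) - 1) * q) := by
    have hnn : (0:ℝ) ≤ 2*(s:ℝ)^2*p := by positivity
    nlinarith [mul_nonneg hnn (sub_nonneg.mpr bSq)]
  nlinarith [hterm, hterm2]

end keyreal

section maincount
variable {s ℓ : ℕ} {M : Fin (s - 1) → Fin s → Fin s}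

lemma obs_card_le_of_tail (hs : 4 ≤ s) (hl : 1 ≤ ℓ)
    (W : Finset (Fin s × Fin (ℓ + 2*s))) (T : Finset (Fin s))
    (hT : ∀ x ∈ Obs (rowColGraph s ℓ M) ↑W, 2*s ≤ (x.2 : ℕ) → x.1 ∈ T) :
    (Obs (rowColGraph s ℓ M) ↑W).ncard ≤ T.card * ℓ + 2*s*s := by
  classical
  set U : Finset (Fin s × Fin (ℓ + 2*s)) :=
    (T ×ˢ (Finset.univ.filter fun c : Fin (ℓ + 2*s) => 2*s ≤ (c : ℕ))) ∪
    (Finset.univ ×ˢ (Finset.univ.filter fun c : Fin (ℓ + 2*s) => (c : ℕ) < 2*s)) with hU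
  have hsub : Obs (rowColGraph s ℓ M) ↑W ⊆ ↑U := by
    intro x hx
    rw [Finset.mem_coe, hU, Finset.mem_union]
    by_cases hc : 2*s ≤ (x.2 : ℕ)
    · left
      rw [Finset.mem_product, Finset.mem_filter]
      exact ⟨hT x hx hc, Finset.mem_univ _, hc⟩
    · right
      rw [Finset.mem_product, Finset.mem_filter]
      exact ⟨Finset.mem_univ _, Finset.mem_univ _, by omega⟩
  calc (Obs (rowColGraph s ℓ M) ↑W).ncard
      ≤ (↑U : Set (Fin s × Fin (ℓ + 2*s))).ncard :=
        Set.ncard_le_ncard hsub (Set.toFinite _)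
    _ = U.card := Set.ncard_coe_finset U
    _ ≤ _ := Finset.card_union_le _ _
    _ ≤ T.card * ℓ + 2*s*s := by
        rw [Finset.card_product, Finset.card_product]
        rw [card_filter_ge (2*s) (by omega), card_filter_lt (2*s) (by omega)]
        rw [Finset.card_univ, Fintype.card_fin]
        have : ℓ + 2*s - 2*s = ℓ := by omega
        rw [this]
        nlinarith [Finset.card_le_univ T]
end maincount

section maincount2
variable {s ℓ : ℕ} {M : Fin (s - 1) → Fin s → Fin s}

lemma obs_card_ge_S (hM1 : ∀ j, Function.Involutive (M j)) (hs : 4 ≤ s) (hl : 1 ≤ ℓ)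
    (W : Finset (Fin s × Fin (ℓ + 2*s)))
    (hWcol : ∀ w ∈ W, (w.2 : ℕ) = 2*s - 1) :
    W.card * (ℓ + 2) ≤ (Obs (rowColGraph s ℓ M) ↑W).ncard := by
  classical
  set R : Finset (Fin s) := W.image Prod.fst with hR
  set U : Finset (Fin s × Fin (ℓ + 2*s)) :=
    R ×ˢ (Finset.univ.filter fun c : Fin (ℓ + 2*s) => 2*s - 2 ≤ (c : ℕ)) with hU
  have hsub : ↑U ⊆ Obs (rowColGraph s ℓ M) ↑W := by
    intro x hx
    rw [Finset.mem_coe, hU, Finset.mem_product, Finset.mem_filter] at hx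
    obtain ⟨hx1, _, hx2⟩ := hx
    rw [hR, Finset.mem_image] at hx1
    obtain ⟨w, hwW, hw1⟩ := hx1
    have hwcol := hWcol w hwW
    have hww : w = (x.1, w.2) := Prod.ext hw1 rfl
    rw [hww] at hwW
    have := obs_row_tail hM1 hs (W := ↑W) hwcol (by exact_mod_cast hwW) x.2 hx2
    rwa [show (x.1, x.2) = x from rfl] at this
  have hcard : U.card = R.card * (ℓ + 2) := by
    rw [hU, Finset.card_product, card_filter_ge (2*s - 2) (by omega)]
    congr 1
    omega
  have hRcard : R.card = W.card := by
    rw [hR]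
    apply Finset.card_image_of_injOn
    intro w hw w' hw' he
    have h1 := hWcol w hw
    have h2 := hWcol w' hw'
    exact Prod.ext he (Fin.ext (by omega))
  calc W.card * (ℓ + 2) = U.card := by rw [hcard, hRcard]
    _ = (↑U : Set (Fin s × Fin (ℓ + 2*s))).ncard := (Set.ncard_coe_finset U).symm
    _ ≤ (Obs (rowColGraph s ℓ M) ↑W).ncard := Set.ncard_le_ncard hsub (Set.toFinite _)
end maincount2


theorem stmt17 (s ℓ : ℕ) (hs : 4 ≤ s) (hse : Even s)
    (hℓ : s ^ 2 * 2 ^ (s + 1) < ℓ)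
    (M : Fin (s - 1) → Fin s → Fin s)
    (hM1 : ∀ j, Function.Involutive (M j))
    (hM2 : ∀ j i, M j i ≠ i)
    (hM3 : ∀ i i' : Fin s, i ≠ i' → ∃! j, M j i = i')
    (A : Finset (Fin s × Fin (ℓ + 2 * s))) (hA : A.card = s)
    -- `A` contains a vertex of the clique column `K` (1-based column `2`, 0-based `1`)
    (hAK : ∃ x ∈ A, x ∈ Finset.univ.image
        (fun i : Fin s => (i, (⟨1, by omega⟩ : Fin (ℓ + 2 * s))))) :
    (∀ q ∈ Set.Icc (0 : ℝ) 1,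
        expolEval (rowColGraph s ℓ M) A q
          ≤ expolEval (rowColGraph s ℓ M)
              (Finset.univ.image
                (fun i : Fin s => (i, (⟨2 * s - 1, by omega⟩ : Fin (ℓ + 2 * s))))) q) ∧
      ∀ q ∈ Set.Ioo (0 : ℝ) 1,
        expolEval (rowColGraph s ℓ M) A q
          < expolEval (rowColGraph s ℓ M)
              (Finset.univ.image
                (fun i : Fin s => (i, (⟨2 * s - 1, by omega⟩ : Fin (ℓ + 2 * s))))) q := by
  classical
  have hpow : s < 2 ^ s := Nat.lt_two_pow_self
  have hls : 2 * s ^ 3 < ℓ := by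
    have h1 : 2 * s ^ 3 ≤ s ^ 2 * 2 ^ (s + 1) := by
      calc 2 * s ^ 3 = 2 * s ^ 2 * s := by ring
        _ ≤ 2 * s ^ 2 * 2 ^ s := Nat.mul_le_mul_left _ (le_of_lt hpow)
        _ = s ^ 2 * 2 ^ (s + 1) := by rw [pow_succ]; ring
    omega
  have hl : 1 ≤ ℓ := by nlinarith
  set G := rowColGraph s ℓ M with hG
  obtain ⟨κ, hκA, hκim⟩ := hAK
  have hκ2 : (κ.2 : ℕ) = 1 := by
    rw [Finset.mem_image] at hκim
    obtain ⟨i, _, hi⟩ := hκim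
    rw [← hi]
  set SS : Finset (Fin s × Fin (ℓ + 2*s)) :=
    Finset.univ.image (fun i : Fin s => (i, (⟨2*s - 1, by omega⟩ : Fin (ℓ + 2*s)))) with hSS
  have hSScard : SS.card = s := by
    rw [hSS, Finset.card_image_of_injective _ (fun a b hab => (Prod.ext_iff.mp hab).1),
      Finset.card_univ, Fintype.card_fin]
  have hSScol : ∀ w ∈ SS, (w.2 : ℕ) = 2*s - 1 := by
    intro w hw
    rw [hSS, Finset.mem_image] at hw
    obtain ⟨i, _, hi⟩ := hw
    rw [← hi]
  -- cardinality of the whole vertex set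
  have hncuniv : (Set.univ : Set (Fin s × Fin (ℓ + 2*s))).ncard = s * (ℓ + 2*s) := by
    rw [Set.ncard_univ, Nat.card_eq_fintype_card, Fintype.card_prod, Fintype.card_fin,
      Fintype.card_fin]
  -- A-side upper bounds
  have hub : ∀ W ∈ A.powerset, ((Obs G ↑W).ncard : ℝ) ≤
      (ℓ : ℝ) * W.card + 2*(s:ℝ)^2 - 2*(s:ℝ)^2 * (if W = ∅ then 1 else 0)
        - (ℓ : ℝ) * (if κ ∈ W then 1 else 0) + (ℓ : ℝ) * (if W = A then 1 else 0) := by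
    intro W hW
    have hWsub : W ⊆ A := Finset.mem_powerset.mp hW
    have hAne : A ≠ ∅ := by
      intro h
      rw [h, Finset.card_empty] at hA
      omega
    by_cases h0 : W = ∅
    · rw [h0]
      rw [if_pos rfl, if_neg (by simp), if_neg (Ne.symm (by simpa [← h0] using hAne))]
      simp [obs_empty]
    · by_cases hκW : κ ∈ W
      · by_cases hWA : W = A
        · -- total bound
          rw [if_neg h0, if_pos hκW, if_pos hWA]
          have hb : (Obs G ↑W).ncard ≤ s * (ℓ + 2*s) := by
            rw [← hncuniv]
            exact Set.ncard_le_ncard (Set.subset_univ _) (Set.toFinite _)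
          have hWc : W.card = s := by rw [hWA, hA]
          have hbR : ((Obs G ↑W).ncard : ℝ) ≤ (s:ℝ) * ((ℓ:ℝ) + 2*(s:ℝ)) := by
            exact_mod_cast hb
          rw [hWc]
          nlinarith [hbR]
        · -- the κ-discount case
          rw [if_neg h0, if_pos hκW, if_neg hWA]
          have hW1 : 1 ≤ W.card := Finset.card_pos.mpr ⟨κ, hκW⟩
          have hT : ∃ T : Finset (Fin s), T.card + 1 ≤ W.card ∧
              (∀ x ∈ Obs G ↑W, 2*s ≤ (x.2 : ℕ) → x.1 ∈ T) := by
            by_cases hrr : ∃ pp ∈ W, pp.1 = κ.1 ∧ pp ≠ κ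
            · obtain ⟨pp, hppW, hpp1, hppne⟩ := hrr
              refine ⟨W.image Prod.fst, ?_, obs_tail_charged hM1 hs hl W⟩
              have himg : W.image Prod.fst = (W.erase pp).image Prod.fst := by
                ext i
                simp only [Finset.mem_image, Finset.mem_erase]
                constructor
                · rintro ⟨w, hw, rfl⟩
                  by_cases hwpp : w = pp
                  · exact ⟨κ, ⟨fun h => hppne h.symm, hκW⟩, by rw [hwpp, hpp1]⟩
                  · exact ⟨w, ⟨hwpp, hw⟩, rfl⟩
                · rintro ⟨w, ⟨_, hw⟩, rfl⟩
                  exact ⟨w, hw, rfl⟩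
              rw [himg]
              have := Finset.card_image_le (s := W.erase pp) (f := Prod.fst)
              have hec : (W.erase pp).card = W.card - 1 := Finset.card_erase_of_mem hppW
              omega
            · push_neg at hrr
              have hrow : ∀ p ∈ W, p.1 = κ.1 → p = (κ.1, κ.2) := by
                intro p hp hp1
                exact hrr p hp hp1
              have hWlt : W.card < s := by
                have hcc := Finset.card_lt_card (HasSubset.Subset.ssubset_of_ne hWsub hWA)
                omega
              have hCu : ∃ u, u ∉ W.image Prod.fst := by
                by_contra hall
                push_neg at hall
                have hsup : Finset.univ ⊆ W.image Prod.fst := fun u _ => hall u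
                have := Finset.card_le_card hsup
                rw [Finset.card_univ, Fintype.card_fin] at this
                have := Finset.card_image_le (s := W) (f := Prod.fst)
                omega
              obtain ⟨u, hu⟩ := hCu
              have hκ1C : κ.1 ∈ W.image Prod.fst := Finset.mem_image_of_mem _ hκW
              have hune : u ≠ κ.1 := fun h => hu (h ▸ hκ1C)
              obtain ⟨jst, hjst, -⟩ := hM3 u κ.1 hune
              refine ⟨(W.image Prod.fst).erase κ.1, ?_, ?_⟩
              · rw [Finset.card_erase_of_mem hκ1C]
                have := Finset.card_image_le (s := W) (f := Prod.fst)
                have hpos : 0 < (W.image Prod.fst).card := Finset.card_pos.mpr ⟨κ.1, hκ1C⟩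
                omega
              · exact obs_tail_charged_kappa hM1 hM2 hs hl W hκ2 hκW hrow hu hjst
          obtain ⟨T, hTcard, hTtail⟩ := hT
          have hb := obs_card_le_of_tail hs hl W T hTtail
          have hb2 : (Obs G ↑W).ncard ≤ (W.card - 1) * ℓ + 2*s*s := by
            calc (Obs G ↑W).ncard ≤ T.card * ℓ + 2*s*s := hb
              _ ≤ (W.card - 1) * ℓ + 2*s*s := by
                  have : T.card ≤ W.card - 1 := by omega
                  exact Nat.add_le_add_right (Nat.mul_le_mul_right _ this) _
          have hcast : (((W.card - 1) * ℓ + 2*s*s : ℕ) : ℝ)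
              = ((W.card : ℝ) - 1) * ℓ + 2*(s:ℝ)^2 := by
            push_cast [Nat.cast_sub hW1]
            ring
          have := (Nat.cast_le (α := ℝ)).mpr hb2
          rw [hcast] at this
          linarith
      · -- no κ: generic bound
        have hWA : W ≠ A := fun h => hκW (h ▸ hκA)
        rw [if_neg h0, if_neg hκW, if_neg hWA]
        have hb := obs_card_le_of_tail hs hl W (W.image Prod.fst)
          (obs_tail_charged hM1 hs hl W)
        have hb2 : (Obs G ↑W).ncard ≤ W.card * ℓ + 2*s*s := by
          calc (Obs G ↑W).ncard ≤ (W.image Prod.fst).card * ℓ + 2*s*s := hb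
            _ ≤ W.card * ℓ + 2*s*s :=
                Nat.add_le_add_right (Nat.mul_le_mul_right _ Finset.card_image_le) _
        have := (Nat.cast_le (α := ℝ)).mpr hb2
        push_cast at this
        nlinarith
  -- S-side lower bounds
  have hlb : ∀ W ∈ SS.powerset,
      ((ℓ : ℝ) + 2) * W.card + (2*(s:ℝ)^2 - 2*s) * (if W = SS then 1 else 0)
        ≤ ((Obs G ↑W).ncard : ℝ) := by
    intro W hW
    have hWsub : W ⊆ SS := Finset.mem_powerset.mp hW
    by_cases hWS : W = SS
    · rw [if_pos hWS, hWS]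
      have hobs : Obs G ↑SS = Set.univ := by
        apply obs_full hM1 hs
        intro i
        refine ⟨⟨2*s - 1, by omega⟩, rfl, ?_⟩
        exact Finset.mem_image_of_mem _ (Finset.mem_univ i)
      rw [hobs, hncuniv, hSScard]
      push_cast
      ring_nf
      nlinarith
    · rw [if_neg hWS]
      have hb := obs_card_ge_S hM1 hs hl W (fun w hw => hSScol w (hWsub hw))
      have := (Nat.cast_le (α := ℝ)).mpr hb
      push_cast at this
      linarith
  -- the main estimate
  have main : ∀ q : ℝ, 0 ≤ q → q ≤ 1 →
      expolEval G A q + (1-q)*q*((ℓ:ℝ) + 2*(s:ℝ) - 2*(s:ℝ)^3) ≤ expolEval G SS q := by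
    intro q hq0 hq1
    have hp0 : 0 ≤ 1 - q := by linarith
    have hpq : (1 - q) + q = 1 := by ring
    have hcononneg : ∀ W : Finset (Fin s × Fin (ℓ + 2*s)),
        0 ≤ q ^ (A.card - W.card) * (1-q) ^ W.card := fun W => by positivity
    -- step 1: A-side
    have step1 : expolEval G A q ≤ ∑ W ∈ A.powerset,
        ((ℓ : ℝ) * W.card + 2*(s:ℝ)^2 - 2*(s:ℝ)^2 * (if W = ∅ then 1 else 0)
          - (ℓ : ℝ) * (if κ ∈ W then 1 else 0) + (ℓ : ℝ) * (if W = A then 1 else 0))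
          * (q ^ (A.card - W.card) * (1-q) ^ W.card) := by
      rw [expolEval]
      refine Finset.sum_le_sum fun W hW => ?_
      rw [mul_assoc]
      exact mul_le_mul_of_nonneg_right (hub W hW) (hcononneg W)
    -- step 2: evaluate the A-side sum
    have step2 : ∑ W ∈ A.powerset,
        ((ℓ : ℝ) * W.card + 2*(s:ℝ)^2 - 2*(s:ℝ)^2 * (if W = ∅ then 1 else 0)
          - (ℓ : ℝ) * (if κ ∈ W then 1 else 0) + (ℓ : ℝ) * (if W = A then 1 else 0))
          * (q ^ (A.card - W.card) * (1-q) ^ W.card)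
        = (ℓ : ℝ) * (A.card * (1-q)) + 2*(s:ℝ)^2 - 2*(s:ℝ)^2 * q ^ A.card
          - (ℓ : ℝ) * (1-q) + (ℓ : ℝ) * (1-q) ^ A.card := by
      have expand : ∀ W ∈ A.powerset,
          ((ℓ : ℝ) * W.card + 2*(s:ℝ)^2 - 2*(s:ℝ)^2 * (if W = ∅ then 1 else 0)
            - (ℓ : ℝ) * (if κ ∈ W then 1 else 0) + (ℓ : ℝ) * (if W = A then 1 else 0))
            * (q ^ (A.card - W.card) * (1-q) ^ W.card)
          = (ℓ : ℝ) * ((W.card : ℝ) * (q ^ (A.card - W.card) * (1-q) ^ W.card))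
            + 2*(s:ℝ)^2 * (q ^ (A.card - W.card) * (1-q) ^ W.card)
            - 2*(s:ℝ)^2 * (if W = ∅ then q ^ (A.card - W.card) * (1-q) ^ W.card else 0)
            - (ℓ : ℝ) * (if κ ∈ W then q ^ (A.card - W.card) * (1-q) ^ W.card else 0)
            + (ℓ : ℝ) * (if W = A then q ^ (A.card - W.card) * (1-q) ^ W.card else 0) := by
        intro W _
        split_ifs <;> ring
      rw [Finset.sum_congr rfl expand]
      rw [Finset.sum_add_distrib, Finset.sum_sub_distrib, Finset.sum_sub_distrib,
        Finset.sum_add_distrib]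
      rw [← Finset.mul_sum, ← Finset.mul_sum, ← Finset.mul_sum, ← Finset.mul_sum,
        ← Finset.mul_sum]
      rw [psum_card A (1-q) q hpq, psum_one A (1-q) q hpq, psum_mem A hκA (1-q) q hpq]
      rw [Finset.sum_ite_eq' A.powerset (∅ : Finset (Fin s × Fin (ℓ + 2*s)))
        (fun W => q ^ (A.card - W.card) * (1-q) ^ W.card)]
      rw [Finset.sum_ite_eq' A.powerset A
        (fun W => q ^ (A.card - W.card) * (1-q) ^ W.card)]
      rw [if_pos (Finset.empty_mem_powerset A), if_pos (Finset.mem_powerset_self A)]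
      simp only [Finset.card_empty, Nat.sub_zero, pow_zero, mul_one, Nat.sub_self, one_mul]
      try ring
    -- step 3: S-side
    have step3 : ∑ W ∈ SS.powerset,
        (((ℓ : ℝ) + 2) * W.card + (2*(s:ℝ)^2 - 2*s) * (if W = SS then 1 else 0))
          * (q ^ (SS.card - W.card) * (1-q) ^ W.card)
        ≤ expolEval G SS q := by
      rw [expolEval]
      refine Finset.sum_le_sum fun W hW => ?_
      rw [mul_assoc]
      exact mul_le_mul_of_nonneg_right (hlb W hW) (by positivity)
    have step4 : ∑ W ∈ SS.powerset,
        (((ℓ : ℝ) + 2) * W.card + (2*(s:ℝ)^2 - 2*s) * (if W = SS then 1 else 0))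
          * (q ^ (SS.card - W.card) * (1-q) ^ W.card)
        = ((ℓ : ℝ) + 2) * (SS.card * (1-q)) + (2*(s:ℝ)^2 - 2*s) * (1-q) ^ SS.card := by
      have expand : ∀ W ∈ SS.powerset,
          (((ℓ : ℝ) + 2) * W.card + (2*(s:ℝ)^2 - 2*s) * (if W = SS then 1 else 0))
            * (q ^ (SS.card - W.card) * (1-q) ^ W.card)
          = ((ℓ : ℝ) + 2) * ((W.card : ℝ) * (q ^ (SS.card - W.card) * (1-q) ^ W.card))
            + (2*(s:ℝ)^2 - 2*s)
              * (if W = SS then q ^ (SS.card - W.card) * (1-q) ^ W.card else 0) := by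
        intro W _
        split_ifs <;> ring
      rw [Finset.sum_congr rfl expand, Finset.sum_add_distrib, ← Finset.mul_sum,
        ← Finset.mul_sum]
      rw [psum_card SS (1-q) q hpq]
      rw [Finset.sum_ite_eq' SS.powerset SS
        (fun W => q ^ (SS.card - W.card) * (1-q) ^ W.card)]
      rw [if_pos (Finset.mem_powerset_self SS)]
      simp only [Nat.sub_self, pow_zero, one_mul]
    -- key inequality
    have hLreal : 2*(s:ℝ)^3 < (ℓ:ℝ) := by exact_mod_cast hls
    have hkey := key_real s hs (ℓ:ℝ) hLreal (1-q) q hp0 hq0 hpq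
    calc expolEval G A q + (1-q)*q*((ℓ:ℝ) + 2*(s:ℝ) - 2*(s:ℝ)^3)
        ≤ ((ℓ : ℝ) * (A.card * (1-q)) + 2*(s:ℝ)^2 - 2*(s:ℝ)^2 * q ^ A.card
            - (ℓ : ℝ) * (1-q) + (ℓ : ℝ) * (1-q) ^ A.card)
            + (1-q)*q*((ℓ:ℝ) + 2*(s:ℝ) - 2*(s:ℝ)^3) := by
          rw [← step2]
          linarith [step1]
      _ = ((ℓ:ℝ)*s*(1-q) + 2*(s:ℝ)^2*(1 - q^s) - (ℓ:ℝ)*((1-q) - (1-q)^s))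
            + (1-q)*q*((ℓ:ℝ) + 2*(s:ℝ) - 2*(s:ℝ)^3) := by
          rw [hA]
          ring
      _ ≤ ((ℓ:ℝ)+2)*s*(1-q) + (2*(s:ℝ)^2 - 2*(s:ℝ))*(1-q)^s := hkey
      _ = ((ℓ : ℝ) + 2) * (SS.card * (1-q)) + (2*(s:ℝ)^2 - 2*s) * (1-q) ^ SS.card := by
          rw [hSScard]
          ring
      _ ≤ expolEval G SS q := by rw [← step4]; exact step3
  have hmargin : 0 < (ℓ:ℝ) + 2*(s:ℝ) - 2*(s:ℝ)^3 := by
    have : 2*(s:ℝ)^3 < (ℓ:ℝ) := by exact_mod_cast hls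
    have hs0 : 0 ≤ (s:ℝ) := Nat.cast_nonneg s
    linarith
  constructor
  · rintro q ⟨hq0, hq1⟩
    have h := main q hq0 hq1
    have : 0 ≤ (1-q)*q := mul_nonneg (by linarith) hq0
    nlinarith
  · rintro q ⟨hq0, hq1⟩
    have h := main q (le_of_lt hq0) (le_of_lt hq1)
    have : 0 < (1-q)*q := mul_pos (by linarith) hq0
    nlinarith
end
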